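/- For any set S, the topological space TO(S) of all total orderings on S, equipped with the topology 𝒰 generated by the sets 𝔘_{(a,b)}, is compact. -/

import Mathlib

/-- A total ordering on `S`: an antisymmetric, transitive and total binary relation. -/
def IsTotalOrdering {S : Type*} (r : S → S → Prop) : Prop :=
  (∀ a b, r a b → r b a → a = b) ∧ (∀ a b c, r a b → r b c → r a c) ∧ (∀ a b, r a b ∨ r b a)

/-- `TO S` is the set of all total orderings on `S`. -/
def TO (S : Type*) : Type _ := {r : S → S → Prop // IsTotalOrdering r}

/-- The underlying relation of a total ordering. -/
def TO.rel {S : Type*} (r : TO S) : S → S → Prop := Subtype.val r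

/-- The subbasic open set `𝔘_{(a,b)} = {≼ ∈ TO(S) : a ≼ b}`. -/
def USet {S : Type*} (a b : S) : Set (TO S) := {r | r.rel a b}

/-- The topology `𝒰` on `TO S`: the coarsest topology for which all `𝔘_{(a,b)}` are open. -/
instance TOTop (S : Type*) : TopologicalSpace (TO S) :=
  TopologicalSpace.generateFrom {U | ∃ a b, U = USet a b}

/-- `TO S` with the topology `𝒰` is compact. -/
theorem TO_compactSpace (S : Type*) : CompactSpace (TO S) := by
  constructor
  rw [isCompact_iff_ultrafilter_le_nhds]
  intro F _
  -- the limit relation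
  set r : S → S → Prop := fun a b => USet a b ∈ F with hr
  have hto : IsTotalOrdering r := by
    refine ⟨?_, ?_, ?_⟩
    · intro a b hab hba
      obtain ⟨t, ht1, ht2⟩ := Filter.nonempty_of_mem (F.inter_mem hab hba)
      exact t.2.1 a b ht1 ht2
    · intro a b c hab hbc
      refine Filter.mem_of_superset (F.inter_mem hab hbc) ?_
      rintro t ⟨h1, h2⟩
      exact t.2.2.1 a b c h1 h2
    · intro a b
      have : USet a b ∪ USet b a ∈ F := by
        have : USet a b ∪ USet b a = Set.univ := by
          ext t
          simpa [USet, TO.rel] using t.2.2.2 a b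
        rw [this]; exact Filter.univ_mem
      exact Ultrafilter.union_mem_iff.mp this
  refine ⟨(⟨r, hto⟩ : TO S), trivial, ?_⟩
  erw [TopologicalSpace.nhds_generateFrom]
  simp only [le_iInf_iff, Set.mem_setOf_eq, and_imp]
  rintro s hmem ⟨a, b, rfl⟩
  rw [Filter.le_principal_iff]
  exact hmem
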